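/- arXiv:0905.1763 — 2 statements merged into one kernel-verified Lean document; each statement's English description precedes it below -/
import Mathlib

section
/- For any graph G, k(G) ≥ min over vertices v of θ_V(N_G(v)), where θ_V denotes the vertex clique cover number of the subgraph induced on the open neighborhood N_G(v). -/
open SimpleGraph

/-- The competition graph of a digraph `D` (given as a relation): distinct vertices
`x`, `y` are adjacent iff they have a common out-neighbor in `D`. -/
def CompetitionGraph {V : Type*} (D : V → V → Prop) : SimpleGraph V where
  Adj x y := x ≠ y ∧ ∃ v, D x v ∧ D y v
  symm := ⟨by rintro x y ⟨h, v, hx, hy⟩; exact ⟨h.symm, v, hy, hx⟩⟩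
  loopless := ⟨by rintro x ⟨h, -⟩; exact h rfl⟩

/-- A digraph is acyclic iff it has no directed cycle, i.e. no vertex reaches itself
by a nonempty directed walk. -/
def DigraphAcyclic {V : Type*} (D : V → V → Prop) : Prop :=
  ∀ v, ¬ Relation.TransGen D v v

/-- The graph `G` together with `k` additional isolated vertices. -/
def addIsolated {V : Type*} (G : SimpleGraph V) (k : ℕ) : SimpleGraph (V ⊕ Fin k) where
  Adj a b := ∃ x y, a = Sum.inl x ∧ b = Sum.inl y ∧ G.Adj x y
  symm := ⟨by rintro a b ⟨x, y, rfl, rfl, h⟩; exact ⟨y, x, rfl, rfl, h.symm⟩⟩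
  loopless := ⟨by
    rintro a ⟨x, y, rfl, hy, h⟩
    obtain rfl := Sum.inl_injective hy
    exact G.irrefl h⟩

/-- `G` plus `k` isolated vertices is the competition graph of some acyclic digraph. -/
def IsCompetitionWitness {V : Type*} (G : SimpleGraph V) (k : ℕ) : Prop :=
  ∃ D : (V ⊕ Fin k) → (V ⊕ Fin k) → Prop,
    DigraphAcyclic D ∧ CompetitionGraph D = addIsolated G k

/-- The competition number of `G`: the least `k` such that `G` plus `k` isolated
vertices is the competition graph of an acyclic digraph. -/
noncomputable def compNum {V : Type*} (G : SimpleGraph V) : ℕ :=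
  sInf {k | IsCompetitionWitness G k}

/-- The generalized edge clique cover number `θ_E(F; H)`: the minimum number of cliques
of `G` contained in the vertex set `H` (i.e. cliques of the induced subgraph on `H`)
needed so that every edge in `F` has both endpoints in some clique of the family. -/
noncomputable def thetaEOn {V : Type*} (G : SimpleGraph V) (F : Set (Sym2 V)) (H : Set V) : ℕ :=
  sInf {n | ∃ f : Fin n → Set V,
    (∀ i, f i ⊆ H ∧ G.IsClique (f i)) ∧ ∀ e ∈ F, ∃ i, ∀ x ∈ e, x ∈ f i}

/-- The edge clique cover number `θ_E(G)`. -/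
noncomputable def thetaE {V : Type*} (G : SimpleGraph V) : ℕ :=
  thetaEOn G G.edgeSet Set.univ

/-- The vertex clique cover number of the subgraph of `G` induced on `S`: the minimum
number of cliques of `G` contained in `S` whose union covers `S`. -/
noncomputable def thetaVOn {V : Type*} (G : SimpleGraph V) (S : Set V) : ℕ :=
  sInf {n | ∃ f : Fin n → Set V,
    (∀ i, f i ⊆ S ∧ G.IsClique (f i)) ∧ ∀ v ∈ S, ∃ i, v ∈ f i}

/-- The closed neighborhood `N_G[U]` of a vertex subset. -/
def closedNbhd {V : Type*} (G : SimpleGraph V) (U : Set V) : Set V :=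
  U ∪ {v | ∃ u ∈ U, G.Adj u v}

/-- The set `E_G[U]` of edges of `G` with at least one endpoint in `U`. -/
def incidentEdges {V : Type*} (G : SimpleGraph V) (U : Set V) : Set (Sym2 V) :=
  {e | e ∈ G.edgeSet ∧ ∃ x ∈ e, x ∈ U}


lemma witness_exists {V : Type*} [Fintype V] (G : SimpleGraph V) :
    ∃ k, IsCompetitionWitness G k := by
  classical
  haveI : Fintype G.edgeSet := Fintype.ofFinite _
  set k := Fintype.card G.edgeSet with hk
  refine ⟨k, ?_⟩
  obtain ⟨g⟩ : Nonempty (G.edgeSet ≃ Fin k) := ⟨Fintype.equivFinOfCardEq rfl⟩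
  refine ⟨fun a b => ∃ (x : V) (e : G.edgeSet), a = Sum.inl x ∧ b = Sum.inr (g e) ∧ x ∈ (e : Sym2 V), ?_, ?_⟩
  · intro v hv
    rw [Relation.transGen_iff] at hv
    rcases hv with ⟨x, e, h1, h2, -⟩ | ⟨b, h1, x, e, h2, h3, -⟩
    · rw [h1] at h2; exact Sum.inl_ne_inr h2
    · -- h1 : TransGen D v b, h2 : b = Sum.inl x, but every D-edge ends in inr
      rcases (Relation.transGen_iff _ _ _).mp h1 with ⟨y, e', -, hb, -⟩ | ⟨c, -, y, e', -, hb, -⟩ <;>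
        · rw [h2] at hb; exact Sum.inl_ne_inr hb
  · ext a b
    constructor
    · rintro ⟨hne, w, ⟨x, e, rfl, rfl, hx⟩, ⟨y, e', rfl, he', hy⟩⟩
      have : e = e' := g.injective (Sum.inr_injective he')
      subst this
      have hxy : x ≠ y := fun h => hne (by rw [h])
      have : (e : Sym2 V) = s(x, y) := (Sym2.mem_and_mem_iff hxy).mp ⟨hx, hy⟩
      have hadj : G.Adj x y := by
        have h2 := e.2
        rw [this] at h2
        exact h2
      exact ⟨x, y, rfl, rfl, hadj⟩
    · rintro ⟨x, y, rfl, rfl, hadj⟩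
      refine ⟨fun h => hadj.ne (Sum.inl_injective h), Sum.inr (g ⟨s(x, y), hadj⟩), ?_, ?_⟩
      · exact ⟨x, ⟨s(x, y), hadj⟩, rfl, rfl, Sym2.mem_mk_left x y⟩
      · exact ⟨y, ⟨s(x, y), hadj⟩, rfl, rfl, Sym2.mem_mk_right x y⟩

lemma main_bound {V : Type*} [Fintype V] [Nonempty V] (G : SimpleGraph V) {k : ℕ}
    (hw : IsCompetitionWitness G k) :
    ∃ v : V, thetaVOn G (G.neighborSet v) ≤ k := by
  classical
  obtain ⟨D, hacyc, heq⟩ := hw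
  have hAdj : ∀ a b, (CompetitionGraph D).Adj a b ↔ (addIsolated G k).Adj a b := by
    intro a b; rw [heq]
  -- well-founded maximal element among inl-vertices
  have hirr : ∀ a, ¬ Relation.TransGen D a a := hacyc
  have htrans : Transitive (fun a b => Relation.TransGen D b a) :=
    fun a b c hab hbc => hbc.trans hab
  haveI : IsTrans (V ⊕ Fin k) (fun a b => Relation.TransGen D b a) := ⟨htrans⟩
  haveI : IsIrrefl (V ⊕ Fin k) (fun a b => Relation.TransGen D b a) := ⟨fun a => hirr a⟩
  have hwf : WellFounded (fun a b : V ⊕ Fin k => Relation.TransGen D b a) :=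
    Finite.wellFounded_of_trans_of_irrefl _
  obtain ⟨m, hm_mem, hm_max⟩ := hwf.has_min (Set.range Sum.inl)
    ⟨Sum.inl (Classical.arbitrary V), Set.mem_range_self _⟩
  obtain ⟨vm, rfl⟩ := hm_mem
  -- no out-neighbor of `inl vm` is an inl-vertex
  have hout : ∀ x : V, ¬ D (Sum.inl vm) (Sum.inl x) := by
    intro x hx
    exact hm_max (Sum.inl x) (Set.mem_range_self x) (Relation.TransGen.single hx)
  refine ⟨vm, ?_⟩
  -- helper: shared prey gives adjacency in G
  have key : ∀ (x y : V) (w : V ⊕ Fin k), x ≠ y → D (Sum.inl x) w → D (Sum.inl y) w →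
      G.Adj x y := by
    intro x y w hne hx hy
    have : (addIsolated G k).Adj (Sum.inl x) (Sum.inl y) :=
      (hAdj _ _).mp ⟨fun h => hne (Sum.inl_injective h), w, hx, hy⟩
    rcases this with ⟨a, b, ha, hb, hab⟩
    obtain rfl := Sum.inl_injective ha
    obtain rfl := Sum.inl_injective hb
    exact hab
  apply Nat.sInf_le
  refine ⟨fun j => if D (Sum.inl vm) (Sum.inr j) then {u : V | u ≠ vm ∧ D (Sum.inl u) (Sum.inr j)} else ∅, ?_, ?_⟩
  · intro j
    by_cases hj : D (Sum.inl vm) (Sum.inr j)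
    · simp only [if_pos hj]
      constructor
      · rintro u ⟨hune, hu⟩
        exact (key u vm (Sum.inr j) hune hu hj).symm
      · rintro u ⟨hune, hu⟩ u' ⟨hu'ne, hu'⟩ huu'
        exact key u u' (Sum.inr j) huu' hu hu'
    · simp only [if_neg hj]
      exact ⟨Set.empty_subset _, by simp [SimpleGraph.IsClique]⟩
  · intro u hu
    have hadj : G.Adj vm u := hu
    have : (CompetitionGraph D).Adj (Sum.inl vm) (Sum.inl u) :=
      (hAdj _ _).mpr ⟨vm, u, rfl, rfl, hadj⟩
    rcases this with ⟨-, w, hvm, hu'⟩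
    rcases w with x | j
    · exact absurd hvm (hout x)
    · exact ⟨j, by simp only [if_pos hvm]; exact ⟨hadj.ne', hu'⟩⟩

theorem opsut_neighborhood_bound {V : Type*} [Fintype V] [Nonempty V]
    (G : SimpleGraph V) :
    compNum G ≥ sInf (Set.range fun v => thetaVOn G (G.neighborSet v)) := by
  have hne : {k | IsCompetitionWitness G k}.Nonempty := witness_exists G
  have hmem : IsCompetitionWitness G (compNum G) := Nat.sInf_mem hne
  obtain ⟨v, hv⟩ := main_bound G hmem
  exact le_trans (Nat.sInf_le (Set.mem_range_self v)) hv
end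

section
/- The competition number of the icosahedron graph equals 4. -/
open SimpleGraph

/-- The edge list of the icosahedron graph (pentagonal antiprism on `1..10` together
with apexes `0` and `11`). -/
def icosaEdges : List (ℕ × ℕ) :=
  [(0,1),(0,2),(0,3),(0,4),(0,5),(1,2),(2,3),(3,4),(4,5),(5,1),
   (11,6),(11,7),(11,8),(11,9),(11,10),(6,7),(7,8),(8,9),(9,10),(10,6),
   (1,6),(1,7),(2,7),(2,8),(3,8),(3,9),(4,9),(4,10),(5,10),(5,6)]

/-- The icosahedron graph: the 5-regular graph on 12 vertices with 30 edges
arising as the 1-skeleton of the icosahedron. -/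
def Icosahedron : SimpleGraph (Fin 12) :=
  SimpleGraph.fromRel (fun i j => ((i : ℕ), (j : ℕ)) ∈ icosaEdges)


section AuxCompetitionIcosa

open Finset

instance : DecidableRel Icosahedron.Adj := fun a b =>
  inferInstanceAs (Decidable (a ≠ b ∧ (((a:ℕ),(b:ℕ)) ∈ icosaEdges ∨ ((b:ℕ),(a:ℕ)) ∈ icosaEdges)))

/-! ### Upper bound: an explicit acyclic digraph construction -/

/-- Arc list of an acyclic digraph on `Fin 12 ⊕ Fin 4` (encoded as `0..15`) whose
competition graph is the icosahedron plus 4 isolated vertices. -/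
def icosaArcs : List (ℕ × ℕ) :=
  [(0,2),(1,2),(0,3),(1,3),(2,3),(0,4),(2,4),(3,4),(0,5),(3,5),(4,5),
   (0,6),(4,6),(5,6),(1,7),(5,7),(6,7),(1,8),(6,8),(7,8),(2,9),(7,9),(8,9),
   (3,10),(8,10),(9,10),(4,11),(9,11),(10,11),(11,12),(6,12),(7,12),
   (11,13),(8,13),(9,13),(11,14),(10,14),(6,14),(5,15),(10,15)]

def wenc : Fin 12 ⊕ Fin 4 → ℕ := fun x => match x with | .inl i => (i : ℕ) | .inr j => 12 + (j : ℕ)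

def Dex : (Fin 12 ⊕ Fin 4) → (Fin 12 ⊕ Fin 4) → Prop := fun a b => (wenc a, wenc b) ∈ icosaArcs

instance : DecidableRel Dex := fun a b => inferInstanceAs (Decidable (_ ∈ _))

lemma Dex_lt : ∀ a b, Dex a b → wenc a < wenc b := by decide

lemma rank_lt_of_transGen {α : Type*} {D : α → α → Prop} {r : α → ℕ}
    (h : ∀ a b, D a b → r a < r b)
    {a b : α} (hab : Relation.TransGen D a b) : r a < r b := by
  induction hab with
  | single h' => exact h _ _ h'
  | tail _ h' ih => exact lt_trans ih (h _ _ h')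

lemma Dex_acyclic : DigraphAcyclic Dex :=
  fun _ h => lt_irrefl _ (rank_lt_of_transGen Dex_lt h)

instance : DecidableRel (CompetitionGraph Dex).Adj := fun x y =>
  inferInstanceAs (Decidable (x ≠ y ∧ ∃ v, Dex x v ∧ Dex y v))

instance : DecidableRel (addIsolated Icosahedron 4).Adj := fun x y =>
  inferInstanceAs (Decidable (∃ a b, x = Sum.inl a ∧ y = Sum.inl b ∧ Icosahedron.Adj a b))

lemma comp_eq_Dex : CompetitionGraph Dex = addIsolated Icosahedron 4 := by
  have h : ∀ x y, (CompetitionGraph Dex).Adj x y ↔ (addIsolated Icosahedron 4).Adj x y := by decide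
  exact SimpleGraph.ext (funext fun x => funext fun y => propext (h x y))

/-! ### Lower bound: combinatorial facts about the icosahedron -/

abbrev NIco (u : Fin 12) : Finset (Fin 12) := Finset.univ.filter (fun b => Icosahedron.Adj u b)

lemma deg5 : ∀ u : Fin 12, (NIco u).card = 5 := by decide

lemma noK4 : ∀ a b c d : Fin 12, Icosahedron.Adj a b → Icosahedron.Adj a c → Icosahedron.Adj a d →
    Icosahedron.Adj b c → Icosahedron.Adj b d → Icosahedron.Adj c d → False := by decide

lemma fifthNbr : ∀ a b c : Fin 12, Icosahedron.Adj a b → Icosahedron.Adj a c →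
    Icosahedron.Adj b c →
    ∃ w, Icosahedron.Adj a w ∧ ¬Icosahedron.Adj w b ∧ ¬Icosahedron.Adj w c := by decide

/-- Key combinatorial lemma: the edges of the icosahedron incident to three distinct
vertices cannot be covered by five cliques. -/
lemma key (u1 u2 u3 : Fin 12) (h12 : u1 ≠ u2) (h13 : u1 ≠ u3) (h23 : u2 ≠ u3)
    (C : Fin 5 → Finset (Fin 12)) (hcl : ∀ i, Icosahedron.IsClique (C i : Set (Fin 12)))
    (hcov : ∀ a, (a = u1 ∨ a = u2 ∨ a = u3) → ∀ b, Icosahedron.Adj a b →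
      ∃ i, a ∈ C i ∧ b ∈ C i) :
    False := by
  classical
  have hAdjmem : ∀ (i : Fin 5) (x y : Fin 12), x ∈ C i → y ∈ C i → x ≠ y →
      Icosahedron.Adj x y := fun i x y hx hy hne => hcl i hx hy hne
  -- any clique minus a point has at most 2 elements
  have hC2 : ∀ (i : Fin 5) (u : Fin 12), u ∈ C i → ((C i).erase u).card ≤ 2 := by
    intro i u hu
    by_contra hc
    push_neg at hc
    obtain ⟨b, c, d, hb, hc', hd, hbc, hbd, hcd⟩ := Finset.two_lt_card_iff.mp hc
    obtain ⟨hbu, hbC⟩ := Finset.mem_erase.mp hb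
    obtain ⟨hcu, hcC⟩ := Finset.mem_erase.mp hc'
    obtain ⟨hdu, hdC⟩ := Finset.mem_erase.mp hd
    exact noK4 u b c d (hAdjmem i u b hu hbC (Ne.symm hbu)) (hAdjmem i u c hu hcC (Ne.symm hcu))
      (hAdjmem i u d hu hdC (Ne.symm hdu)) (hAdjmem i b c hbC hcC hbc)
      (hAdjmem i b d hbC hdC hbd) (hAdjmem i c d hcC hdC hcd)
  set Tu : Fin 12 → Finset (Fin 5) := fun u => Finset.univ.filter (fun i => u ∈ C i) with hTu
  have claim1 : ∀ u, (u = u1 ∨ u = u2 ∨ u = u3) → 3 ≤ (Tu u).card := by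
    intro u hu
    have hex : ∀ b, b ∈ NIco u → ∃ i, u ∈ C i ∧ b ∈ C i := by
      intro b hb
      exact hcov u hu b (Finset.mem_filter.mp hb).2
    set f : Fin 12 → Fin 5 := fun b => if h : ∃ i, u ∈ C i ∧ b ∈ C i then h.choose else 0 with hf
    have hspec : ∀ b ∈ NIco u, u ∈ C (f b) ∧ b ∈ C (f b) := by
      intro b hb
      have h := hex b hb
      simp only [hf, dif_pos h]
      exact h.choose_spec
    have hmaps : ∀ b ∈ NIco u, f b ∈ Tu u := by
      intro b hb
      exact Finset.mem_filter.mpr ⟨Finset.mem_univ _, (hspec b hb).1⟩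
    have hcard := Finset.card_eq_sum_card_fiberwise hmaps
    have hfib : ∀ i ∈ Tu u, ((NIco u).filter (fun b => f b = i)).card ≤ 2 := by
      intro i hi
      have hui : u ∈ C i := (Finset.mem_filter.mp hi).2
      have hsub : (NIco u).filter (fun b => f b = i) ⊆ (C i).erase u := by
        intro b hb
        obtain ⟨hbN, hfb⟩ := Finset.mem_filter.mp hb
        have hadj : Icosahedron.Adj u b := (Finset.mem_filter.mp hbN).2
        refine Finset.mem_erase.mpr ⟨hadj.ne', ?_⟩
        have := (hspec b hbN).2
        rwa [hfb] at this
      exact le_trans (Finset.card_le_card hsub) (hC2 i u hui)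
    have hsum : ∑ i ∈ Tu u, ((NIco u).filter (fun b => f b = i)).card ≤ ∑ i ∈ Tu u, 2 :=
      Finset.sum_le_sum hfib
    rw [← hcard] at hsum
    rw [deg5] at hsum
    simp only [Finset.sum_const, smul_eq_mul] at hsum
    omega
  -- two nonadjacent centers give a contradiction
  have pairDis : ∀ x y : Fin 12, x ≠ y → ¬Icosahedron.Adj x y →
      3 ≤ (Tu x).card → 3 ≤ (Tu y).card → False := by
    intro x y hne hnadj hx hy
    have hdisj : Disjoint (Tu x) (Tu y) := by
      rw [Finset.disjoint_left]
      intro i hix hiy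
      exact hnadj (hAdjmem i x y (Finset.mem_filter.mp hix).2 (Finset.mem_filter.mp hiy).2 hne)
    have hcu := Finset.card_union_of_disjoint hdisj
    have hle : (Tu x ∪ Tu y).card ≤ 5 := by
      have := Finset.card_le_univ (Tu x ∪ Tu y)
      simpa using this
    omega
  by_cases hA12 : Icosahedron.Adj u1 u2
  · by_cases hA13 : Icosahedron.Adj u1 u3
    · by_cases hA23 : Icosahedron.Adj u2 u3
      · -- triangle case
        obtain ⟨w1, hw1a, hw1b, hw1c⟩ := fifthNbr u1 u2 u3 hA12 hA13 hA23
        obtain ⟨w2, hw2a, hw2b, hw2c⟩ := fifthNbr u2 u1 u3 hA12.symm hA23 hA13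
        obtain ⟨w3, hw3a, hw3b, hw3c⟩ := fifthNbr u3 u1 u2 hA13.symm hA23.symm hA12
        obtain ⟨i1, hu1i1, hw1i1⟩ := hcov u1 (Or.inl rfl) w1 hw1a
        obtain ⟨i2, hu2i2, hw2i2⟩ := hcov u2 (Or.inr (Or.inl rfl)) w2 hw2a
        obtain ⟨i3, hu3i3, hw3i3⟩ := hcov u3 (Or.inr (Or.inr rfl)) w3 hw3a
        have hw1u2 : w1 ≠ u2 := fun h => hw1c (h ▸ hA23)
        have hw1u3 : w1 ≠ u3 := fun h => hw1b (h ▸ hA23.symm)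
        have hw2u1 : w2 ≠ u1 := fun h => hw2c (h ▸ hA13)
        have hw2u3 : w2 ≠ u3 := fun h => hw2b (h ▸ hA13.symm)
        have hw3u1 : w3 ≠ u1 := fun h => hw3c (h ▸ hA12)
        have hw3u2 : w3 ≠ u2 := fun h => hw3b (h ▸ hA12.symm)
        have hu2i1 : u2 ∉ C i1 := fun h => hw1b (hAdjmem i1 w1 u2 hw1i1 h hw1u2)
        have hu3i1 : u3 ∉ C i1 := fun h => hw1c (hAdjmem i1 w1 u3 hw1i1 h hw1u3)
        have hu1i2 : u1 ∉ C i2 := fun h => hw2b (hAdjmem i2 w2 u1 hw2i2 h hw2u1)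
        have hu3i2 : u3 ∉ C i2 := fun h => hw2c (hAdjmem i2 w2 u3 hw2i2 h hw2u3)
        have hu1i3 : u1 ∉ C i3 := fun h => hw3b (hAdjmem i3 w3 u1 hw3i3 h hw3u1)
        have hu2i3 : u2 ∉ C i3 := fun h => hw3c (hAdjmem i3 w3 u2 hw3i3 h hw3u2)
        have hi12 : i1 ≠ i2 := fun h => hu1i2 (h ▸ hu1i1)
        have hi13 : i1 ≠ i3 := fun h => hu1i3 (h ▸ hu1i1)
        have hi23 : i2 ≠ i3 := fun h => hu2i3 (h ▸ hu2i2)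
        set rest : Finset (Fin 5) := Finset.univ \ {i1, i2, i3} with hrest
        have hi1rest : i1 ∉ rest := by simp [hrest]
        have hrestcard : rest.card = 2 := by
          rw [hrest, Finset.card_sdiff_of_subset (Finset.subset_univ _)]
          have h3 : ({i1, i2, i3} : Finset (Fin 5)).card = 3 := by
            rw [Finset.card_insert_of_notMem (by simp [hi12, hi13]),
              Finset.card_insert_of_notMem (by simp [hi23]), Finset.card_singleton]
          simp [h3]
        -- generic: Tu u = insert i rest
        have hTueq : ∀ (u : Fin 12) (i : Fin 5), (u = u1 ∨ u = u2 ∨ u = u3) → u ∈ C i →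
            (∀ j : Fin 5, j ≠ i → j ∈ ({i1, i2, i3} : Finset (Fin 5)) → u ∉ C j) →
            Tu u = insert i rest := by
          intro u i hu hui hnot
          have hsub : Tu u ⊆ insert i rest := by
            intro j hj
            have hjC : u ∈ C j := (Finset.mem_filter.mp hj).2
            by_cases hji : j = i
            · exact hji ▸ Finset.mem_insert_self _ _
            · refine Finset.mem_insert_of_mem ?_
              rw [hrest, Finset.mem_sdiff]
              refine ⟨Finset.mem_univ _, fun hmem => hnot j hji hmem hjC⟩
          have hins : (insert i rest).card ≤ 3 := le_trans (Finset.card_insert_le _ _) (by omega)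
          exact Finset.eq_of_subset_of_card_le hsub (le_trans hins (claim1 u hu)) |>.symm |>.symm
        have hTu1 : Tu u1 = insert i1 rest := by
          refine hTueq u1 i1 (Or.inl rfl) hu1i1 ?_
          intro j hji hjmem hjC
          rcases Finset.mem_insert.mp hjmem with h | hjmem'
          · exact hji h
          rcases Finset.mem_insert.mp hjmem' with h | h
          · exact hu1i2 (h ▸ hjC)
          · exact hu1i3 ((Finset.mem_singleton.mp h) ▸ hjC)
        have hTu2 : Tu u2 = insert i2 rest := by
          refine hTueq u2 i2 (Or.inr (Or.inl rfl)) hu2i2 ?_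
          intro j hji hjmem hjC
          rcases Finset.mem_insert.mp hjmem with h | hjmem'
          · exact hu2i1 (h ▸ hjC)
          rcases Finset.mem_insert.mp hjmem' with h | h
          · exact hji h
          · exact hu2i3 ((Finset.mem_singleton.mp h) ▸ hjC)
        have hTu3 : Tu u3 = insert i3 rest := by
          refine hTueq u3 i3 (Or.inr (Or.inr rfl)) hu3i3 ?_
          intro j hji hjmem hjC
          rcases Finset.mem_insert.mp hjmem with h | hjmem'
          · exact hu3i1 (h ▸ hjC)
          rcases Finset.mem_insert.mp hjmem' with h | h
          · exact hu3i2 (h ▸ hjC)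
          · exact hji (Finset.mem_singleton.mp h)
        have hrestU : ∀ j ∈ rest, u1 ∈ C j ∧ u2 ∈ C j ∧ u3 ∈ C j := by
          intro j hj
          have h1 : j ∈ Tu u1 := hTu1 ▸ Finset.mem_insert_of_mem hj
          have h2 : j ∈ Tu u2 := hTu2 ▸ Finset.mem_insert_of_mem hj
          have h3 : j ∈ Tu u3 := hTu3 ▸ Finset.mem_insert_of_mem hj
          exact ⟨(Finset.mem_filter.mp h1).2, (Finset.mem_filter.mp h2).2,
            (Finset.mem_filter.mp h3).2⟩
        have hCj : ∀ j ∈ rest, ∀ y ∈ C j, y = u1 ∨ y = u2 ∨ y = u3 := by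
          intro j hj y hy
          by_contra hy'
          push_neg at hy'
          obtain ⟨hy1, hy2, hy3⟩ := hy'
          obtain ⟨hju1, hju2, hju3⟩ := hrestU j hj
          exact noK4 y u1 u2 u3 (hAdjmem j y u1 hy hju1 hy1) (hAdjmem j y u2 hy hju2 hy2)
            (hAdjmem j y u3 hy hju3 hy3) hA12 hA13 hA23
        have hNsub : NIco u1 ⊆ (C i1).erase u1 ∪ {u2, u3} := by
          intro b hb
          have hadj : Icosahedron.Adj u1 b := (Finset.mem_filter.mp hb).2
          obtain ⟨i, hui, hbi⟩ := hcov u1 (Or.inl rfl) b hadj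
          have hiT : i ∈ Tu u1 := Finset.mem_filter.mpr ⟨Finset.mem_univ _, hui⟩
          rw [hTu1] at hiT
          rcases Finset.mem_insert.mp hiT with rfl | hirest
          · exact Finset.mem_union_left _ (Finset.mem_erase.mpr ⟨hadj.ne', hbi⟩)
          · refine Finset.mem_union_right _ ?_
            rcases hCj i hirest b hbi with rfl | rfl | rfl
            · exact absurd rfl hadj.ne'
            · exact Finset.mem_insert_self _ _
            · exact Finset.mem_insert_of_mem (Finset.mem_singleton_self _)
        have hcard1 : (NIco u1).card ≤ ((C i1).erase u1).card + 2 := by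
          refine le_trans (Finset.card_le_card hNsub) (le_trans (Finset.card_union_le _ _) ?_)
          have : ({u2, u3} : Finset (Fin 12)).card ≤ 2 :=
            le_trans (Finset.card_insert_le _ _) (by simp)
          omega
        have := hC2 i1 u1 hu1i1
        rw [deg5] at hcard1
        omega
      · exact pairDis u2 u3 h23 hA23 (claim1 u2 (Or.inr (Or.inl rfl)))
          (claim1 u3 (Or.inr (Or.inr rfl)))
    · exact pairDis u1 u3 h13 hA13 (claim1 u1 (Or.inl rfl)) (claim1 u3 (Or.inr (Or.inr rfl)))
  · exact pairDis u1 u2 h12 hA12 (claim1 u1 (Or.inl rfl)) (claim1 u2 (Or.inr (Or.inl rfl)))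

lemma exists_maximal_rel {α : Type*} [Fintype α] (R : α → α → Prop) (hirr : ∀ a, ¬R a a)
    (htr : ∀ {a b c : α}, R a b → R b c → R a c) (s : Finset α) (hs : s.Nonempty) :
    ∃ m ∈ s, ∀ x ∈ s, ¬R m x := by
  letI : Preorder α :=
  { le := fun a b => a = b ∨ R a b
    lt := R
    le_refl := fun a => Or.inl rfl
    le_trans := by
      rintro a b c (rfl | hab) (rfl | hbc)
      · exact Or.inl rfl
      · exact Or.inr hbc
      · exact Or.inr hab
      · exact Or.inr (htr hab hbc)
    lt_iff_le_not_ge := by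
      intro a b
      constructor
      · intro h
        refine ⟨Or.inr h, ?_⟩
        rintro (rfl | hba)
        · exact hirr _ h
        · exact hirr _ (htr h hba)
      · rintro ⟨(rfl | hab), hnot⟩
        · exact absurd (Or.inl rfl) hnot
        · exact hab }
  obtain ⟨m, hm, hmax⟩ := Finset.exists_maximal hs
  refine ⟨m, hm, fun x hx hR => ?_⟩
  rcases hmax hx (Or.inr hR) with rfl | hxm
  · exact hirr _ hR
  · exact hirr _ (htr hR hxm)

lemma no_witness_le3 (k : ℕ) (hk : k ≤ 3) : ¬ IsCompetitionWitness Icosahedron k := by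
  classical
  rintro ⟨D, hac, heq⟩
  have hAdjIff : ∀ x y, (CompetitionGraph D).Adj x y ↔ (addIsolated Icosahedron k).Adj x y :=
    fun x y => by rw [heq]
  set R := Relation.TransGen D with hR
  have hirr : ∀ a, ¬ R a a := hac
  have htr : ∀ {a b c}, R a b → R b c → R a c := fun h1 h2 => h1.trans h2
  set A : Finset (Fin 12 ⊕ Fin k) := Finset.univ.image Sum.inl with hA
  have hmemA : ∀ z : Fin 12, Sum.inl z ∈ A := by
    intro z; exact Finset.mem_image.mpr ⟨z, Finset.mem_univ _, rfl⟩
  have hAcard : A.card = 12 := by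
    rw [hA, Finset.card_image_of_injective _ Sum.inl_injective, Finset.card_univ, Fintype.card_fin]
  obtain ⟨v12, hv12A, hmax12⟩ := exists_maximal_rel R hirr htr A
    (Finset.card_pos.mp (by omega))
  have hcard1 : (A.erase v12).card = 11 := by rw [Finset.card_erase_of_mem hv12A, hAcard]
  obtain ⟨v11, hv11A, hmax11⟩ := exists_maximal_rel R hirr htr (A.erase v12)
    (Finset.card_pos.mp (by omega))
  have hcard2 : ((A.erase v12).erase v11).card = 10 := by
    rw [Finset.card_erase_of_mem hv11A, hcard1]
  obtain ⟨v10, hv10A, hmax10⟩ := exists_maximal_rel R hirr htr ((A.erase v12).erase v11)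
    (Finset.card_pos.mp (by omega))
  obtain ⟨u3, -, hu3⟩ := Finset.mem_image.mp hv12A
  obtain ⟨hv11ne, hv11A'⟩ := Finset.mem_erase.mp hv11A
  obtain ⟨u2, -, hu2⟩ := Finset.mem_image.mp hv11A'
  obtain ⟨hv10ne1, hv10A'⟩ := Finset.mem_erase.mp hv10A
  obtain ⟨hv10ne2, hv10A''⟩ := Finset.mem_erase.mp hv10A'
  obtain ⟨u1, -, hu1⟩ := Finset.mem_image.mp hv10A''
  have hne12 : u1 ≠ u2 := fun h => hv10ne1 (by rw [← hu1, ← hu2, h])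
  have hne13 : u1 ≠ u3 := fun h => hv10ne2 (by rw [← hu1, ← hu3, h])
  have hne23 : u2 ≠ u3 := fun h => hv11ne (by rw [← hu2, ← hu3, h])
  -- cliques
  set Cl : (Fin 12 ⊕ Fin k) → Finset (Fin 12) :=
    fun w => Finset.univ.filter (fun x => D (Sum.inl x) w) with hCl
  have hClmem : ∀ w x, x ∈ Cl w ↔ D (Sum.inl x) w := by
    intro w x
    simp [hCl]
  have hClClique : ∀ w, Icosahedron.IsClique (Cl w : Set (Fin 12)) := by
    intro w x hx y hy hne
    have hx' : D (Sum.inl x) w := (hClmem w x).mp hx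
    have hy' : D (Sum.inl y) w := (hClmem w y).mp hy
    have hadj : (CompetitionGraph D).Adj (Sum.inl x) (Sum.inl y) :=
      ⟨fun h => hne (Sum.inl_injective h), w, hx', hy'⟩
    obtain ⟨a, b, ha, hb, hab⟩ := (hAdjIff _ _).mp hadj
    obtain rfl : x = a := Sum.inl_injective ha
    obtain rfl : y = b := Sum.inl_injective hb
    exact hab
  have hedge : ∀ a b : Fin 12, Icosahedron.Adj a b →
      ∃ v, D (Sum.inl a) v ∧ D (Sum.inl b) v := by
    intro a b hab
    have h : (addIsolated Icosahedron k).Adj (Sum.inl a) (Sum.inl b) := ⟨a, b, rfl, rfl, hab⟩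
    obtain ⟨-, v, hv⟩ := (hAdjIff _ _).mpr h
    exact ⟨v, hv⟩
  have hclass : ∀ a, (a = u1 ∨ a = u2 ∨ a = u3) → ∀ v, D (Sum.inl a) v →
      v = v11 ∨ v = v12 ∨ ∃ t : Fin k, v = Sum.inr t := by
    intro a ha v hD
    have hRav : R (Sum.inl a) v := Relation.TransGen.single hD
    cases v with
    | inr t => exact Or.inr (Or.inr ⟨t, rfl⟩)
    | inl z =>
      rcases ha with rfl | rfl | rfl
      · -- a = u1, inl u1 = v10
        by_cases h1 : Sum.inl z = v12
        · exact Or.inr (Or.inl h1)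
        by_cases h2 : Sum.inl z = v11
        · exact Or.inl h2
        exfalso
        refine hmax10 (Sum.inl z) ?_ (by rwa [hu1] at hRav)
        exact Finset.mem_erase.mpr ⟨h2, Finset.mem_erase.mpr ⟨h1, hmemA z⟩⟩
      · by_cases h1 : Sum.inl z = v12
        · exact Or.inr (Or.inl h1)
        exfalso
        refine hmax11 (Sum.inl z) ?_ (by rwa [hu2] at hRav)
        exact Finset.mem_erase.mpr ⟨h1, hmemA z⟩
      · exact absurd (by rwa [hu3] at hRav) (hmax12 (Sum.inl z) (hmemA z))
  set g : Fin 5 → (Fin 12 ⊕ Fin k) := fun i =>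
    if i.val = 0 then v12 else if i.val = 1 then v11
    else if h : i.val - 2 < k then Sum.inr ⟨i.val - 2, h⟩ else v12 with hg
  have hg0 : g 0 = v12 := by simp [hg]
  have hg1 : g 1 = v11 := by simp [hg]
  have hgt : ∀ t : Fin k, g ⟨t.val + 2, by omega⟩ = Sum.inr t := by
    intro t
    have ht := t.isLt
    rw [hg]
    simp only []
    rw [if_neg (by omega), if_neg (by omega), dif_pos (by simpa using ht),
      show (⟨↑t + 2 - 2, by simpa using ht⟩ : Fin k) = t from Fin.ext (by simp)]
  refine key u1 u2 u3 hne12 hne13 hne23 (fun i => Cl (g i)) (fun i => hClClique _) ?_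
  intro a ha b hab
  obtain ⟨v, hav, hbv⟩ := hedge a b hab
  rcases hclass a ha v hav with rfl | rfl | ⟨t, rfl⟩
  · exact ⟨1, (hClmem _ a).mpr (hg1 ▸ hav), (hClmem _ b).mpr (hg1 ▸ hbv)⟩
  · exact ⟨0, (hClmem _ a).mpr (hg0 ▸ hav), (hClmem _ b).mpr (hg0 ▸ hbv)⟩
  · exact ⟨⟨t.val + 2, by omega⟩, (hClmem _ a).mpr ((hgt t) ▸ hav),
      (hClmem _ b).mpr ((hgt t) ▸ hbv)⟩

end AuxCompetitionIcosa

theorem competition_number_icosahedron :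
    compNum Icosahedron = 4 := by
  have h4 : IsCompetitionWitness Icosahedron 4 := ⟨Dex, Dex_acyclic, comp_eq_Dex⟩
  refine le_antisymm (Nat.sInf_le h4) (le_csInf ⟨4, h4⟩ ?_)
  intro j hj
  by_contra h
  push_neg at h
  exact no_witness_le3 j (by omega) hj
end
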